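/- arXiv:2110.01234 — 4 statements merged into one kernel-verified Lean document; each statement's English description precedes it below -/
import Mathlib

section
/- For R > 0, μ > 0, n ≥ 2, and every X ∈ [0,∞)², the trace of the Hessian matrix D²Φ_n(X), namely ∂₁²Φ_n(X) + ∂₂²Φ_n(X), is non-negative. -/
open Matrix Finset

/-- `α_{k,n} = R (k + μ (n - k - 1))`. -/
noncomputable def alph (R mu : ℝ) (n k : ℕ) : ℝ := R * ((k : ℝ) + mu * ((n : ℝ) - (k : ℝ) - 1))

/-- `a_{j,n}`. -/
noncomputable def coefa (R mu : ℝ) (n j : ℕ) : ℝ :=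
  (n.choose j : ℝ) * ∏ k ∈ Finset.range j, ((k : ℝ) + alph R mu n k) / alph R mu n k

/-- `Φ_n(X) = Σ_{j=0}^n a_{j,n} X₁^j X₂^{n-j}`. -/
noncomputable def Phi (R mu : ℝ) (n : ℕ) (X : ℝ × ℝ) : ℝ :=
  ∑ j ∈ Finset.range (n + 1), coefa R mu n j * X.1 ^ j * X.2 ^ (n - j)

/-- first partial derivative of `Φ_n` in the first variable. -/
noncomputable def d1Phi (R mu : ℝ) (n : ℕ) (X : ℝ × ℝ) : ℝ :=
  deriv (fun t => Phi R mu n (t, X.2)) X.1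

/-- first partial derivative of `Φ_n` in the second variable. -/
noncomputable def d2Phi (R mu : ℝ) (n : ℕ) (X : ℝ × ℝ) : ℝ :=
  deriv (fun t => Phi R mu n (X.1, t)) X.2

/-- `∂₁²Φ_n`. -/
noncomputable def d11Phi (R mu : ℝ) (n : ℕ) (X : ℝ × ℝ) : ℝ :=
  deriv (fun t => d1Phi R mu n (t, X.2)) X.1

/-- `∂₁∂₂Φ_n`. -/
noncomputable def d12Phi (R mu : ℝ) (n : ℕ) (X : ℝ × ℝ) : ℝ :=
  deriv (fun t => d2Phi R mu n (t, X.2)) X.1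

/-- `∂₂²Φ_n`. -/
noncomputable def d22Phi (R mu : ℝ) (n : ℕ) (X : ℝ × ℝ) : ℝ :=
  deriv (fun t => d2Phi R mu n (X.1, t)) X.2

/-- The Hessian matrix `D²Φ_n(X)`. -/
noncomputable def hessPhi (R mu : ℝ) (n : ℕ) (X : ℝ × ℝ) : Matrix (Fin 2) (Fin 2) ℝ :=
  !![d11Phi R mu n X, d12Phi R mu n X; d12Phi R mu n X, d22Phi R mu n X]

/-- The mobility matrix `M(X)`. -/
noncomputable def mobM (R mu : ℝ) (X : ℝ × ℝ) : Matrix (Fin 2) (Fin 2) ℝ :=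
  !![(1 + R) * X.1, R * X.1; mu * R * X.2, mu * R * X.2]

/-- The quantity `A_{j,k}`. -/
noncomputable def Acoef (R mu : ℝ) (n j k : ℕ) : ℝ :=
  ((j : ℝ) + 2) * ((n : ℝ) - (k : ℝ)) * coefa R mu n (j + 2) * coefa R mu n k
    - ((n : ℝ) - (j : ℝ) - 1) * ((k : ℝ) + 1) * coefa R mu n (j + 1) * coefa R mu n (k + 1)

/-- `ν_n`. -/
noncomputable def nuc (R mu : ℝ) (n : ℕ) : ℝ :=
  Real.exp (((n : ℝ) - 1) * ((1 + R * max 1 mu) * Real.log (1 + 1 / (R * max 1 mu)) - 1)) - 1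

lemma deriv_msum (f : ℕ → ℝ) (e : ℕ → ℕ) (m : ℕ) (x : ℝ) :
    deriv (fun t => ∑ j ∈ Finset.range m, f j * t ^ (e j)) x
      = ∑ j ∈ Finset.range m, f j * (e j : ℝ) * x ^ (e j - 1) := by
  have h : HasDerivAt (fun t => ∑ j ∈ Finset.range m, f j * t ^ (e j))
      (∑ j ∈ Finset.range m, f j * (e j : ℝ) * x ^ (e j - 1)) x := by
    apply HasDerivAt.fun_sum
    intro j _
    have := (hasDerivAt_pow (e j) x).const_mul (f j)
    convert this using 1
    · rfl
    · ring
  exact h.deriv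

lemma Phi_fst (R mu : ℝ) (n : ℕ) (y : ℝ) :
    (fun t => Phi R mu n (t, y)) = fun t =>
      ∑ j ∈ Finset.range (n + 1), (coefa R mu n j * y ^ (n - j)) * t ^ j := by
  funext t
  simp only [Phi]
  exact Finset.sum_congr rfl fun j _ => by ring

lemma Phi_snd (R mu : ℝ) (n : ℕ) (x : ℝ) :
    (fun t => Phi R mu n (x, t)) = fun t =>
      ∑ j ∈ Finset.range (n + 1), (coefa R mu n j * x ^ j) * t ^ (n - j) := by
  funext t
  simp only [Phi]

lemma d1Phi_pair (R mu : ℝ) (n : ℕ) (x y : ℝ) :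
    d1Phi R mu n (x, y) = ∑ j ∈ Finset.range (n + 1),
      (coefa R mu n j * y ^ (n - j) * (j : ℝ)) * x ^ (j - 1) := by
  show deriv (fun t => Phi R mu n (t, y)) x = _
  rw [Phi_fst, deriv_msum]

lemma d2Phi_pair (R mu : ℝ) (n : ℕ) (x y : ℝ) :
    d2Phi R mu n (x, y) = ∑ j ∈ Finset.range (n + 1),
      (coefa R mu n j * x ^ j * ((n - j : ℕ) : ℝ)) * y ^ (n - j - 1) := by
  show deriv (fun t => Phi R mu n (x, t)) y = _
  rw [Phi_snd, deriv_msum]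

lemma d11Phi_eq (R mu : ℝ) (n : ℕ) (X : ℝ × ℝ) :
    d11Phi R mu n X = ∑ j ∈ Finset.range (n + 1),
      (coefa R mu n j * X.2 ^ (n - j) * (j : ℝ)) * ((j - 1 : ℕ) : ℝ) * X.1 ^ (j - 1 - 1) := by
  show deriv (fun t => d1Phi R mu n (t, X.2)) X.1 = _
  have h : (fun t => d1Phi R mu n (t, X.2)) = fun t =>
      ∑ j ∈ Finset.range (n + 1),
        (coefa R mu n j * X.2 ^ (n - j) * (j : ℝ)) * t ^ (j - 1) := by
    funext t
    rw [d1Phi_pair]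
  rw [h, deriv_msum]

lemma d22Phi_eq (R mu : ℝ) (n : ℕ) (X : ℝ × ℝ) :
    d22Phi R mu n X = ∑ j ∈ Finset.range (n + 1),
      (coefa R mu n j * X.1 ^ j * ((n - j : ℕ) : ℝ)) * ((n - j - 1 : ℕ) : ℝ)
        * X.2 ^ (n - j - 1 - 1) := by
  show deriv (fun t => d2Phi R mu n (X.1, t)) X.2 = _
  have h : (fun t => d2Phi R mu n (X.1, t)) = fun t =>
      ∑ j ∈ Finset.range (n + 1),
        (coefa R mu n j * X.1 ^ j * ((n - j : ℕ) : ℝ)) * t ^ (n - j - 1) := by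
    funext t
    rw [d2Phi_pair]
  rw [h, deriv_msum]

lemma coefa_nonneg (R mu : ℝ) (hR : 0 < R) (hmu : 0 < mu) (n j : ℕ) (hj : j ≤ n) :
    0 ≤ coefa R mu n j := by
  apply mul_nonneg (Nat.cast_nonneg _)
  apply Finset.prod_nonneg
  intro k hk
  rw [Finset.mem_range] at hk
  have hkn : (k : ℝ) ≤ (n : ℝ) - 1 := by
    have : k + 1 ≤ n := lt_of_lt_of_le hk hj
    have := (Nat.cast_le (α := ℝ)).2 this
    push_cast at this
    linarith
  have halph : 0 ≤ alph R mu n k := by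
    unfold alph
    apply mul_nonneg hR.le
    have : 0 ≤ mu * ((n : ℝ) - (k : ℝ) - 1) := mul_nonneg hmu.le (by linarith)
    positivity
  exact div_nonneg (add_nonneg (Nat.cast_nonneg _) halph) halph

theorem stmt3 (R mu : ℝ) (hR : 0 < R) (hmu : 0 < mu) (n : ℕ) (hn : 2 ≤ n)
    (X : ℝ × ℝ) (hX1 : 0 ≤ X.1) (hX2 : 0 ≤ X.2) :
    0 ≤ d11Phi R mu n X + d22Phi R mu n X := by
  have h1 : 0 ≤ d11Phi R mu n X := by
    rw [d11Phi_eq]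
    apply Finset.sum_nonneg
    intro j hj
    rw [Finset.mem_range] at hj
    have hc := coefa_nonneg R mu hR hmu n j (Nat.lt_succ_iff.1 hj)
    positivity
  have h2 : 0 ≤ d22Phi R mu n X := by
    rw [d22Phi_eq]
    apply Finset.sum_nonneg
    intro j hj
    rw [Finset.mem_range] at hj
    have hc := coefa_nonneg R mu hR hmu n j (Nat.lt_succ_iff.1 hj)
    positivity
  linarith
end

section
/- For R > 0, μ > 0, n ≥ 3, define A_{j,k} := (j+2)(n-k) a_{j+2,n} a_{k,n} − (n-j-1)(k+1) a_{j+1,n} a_{k+1,n} for 0 ≤ j,k ≤ n-2. Then A_{j,k} = μR(n-1) · (n-j-1)(n-k)(j+1-k) / (α_{j+1,n} α_{k,n}) · a_{j+1,n} a_{k,n}. -/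
open Matrix Finset

lemma alph_pos (R mu : ℝ) (hR : 0 < R) (hmu : 0 < mu) (n k : ℕ) (h2 : 2 ≤ n)
    (hk : k ≤ n - 1) : 0 < alph R mu n k := by
  have hkn : k + 1 ≤ n := by omega
  have hk' : (k : ℝ) + 1 ≤ (n : ℝ) := by exact_mod_cast hkn
  have h2' : (2 : ℝ) ≤ (n : ℝ) := by exact_mod_cast h2
  unfold alph
  apply mul_pos hR
  rcases Nat.eq_zero_or_pos k with h | h
  · subst h
    push_cast
    have : 0 < mu * ((n : ℝ) - 0 - 1) := mul_pos hmu (by linarith)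
    linarith
  · have h1 : (1 : ℝ) ≤ (k : ℝ) := by exact_mod_cast h
    have : 0 ≤ mu * ((n : ℝ) - (k : ℝ) - 1) := mul_nonneg hmu.le (by linarith)
    linarith

lemma coefa_step (R mu : ℝ) (hR : 0 < R) (hmu : 0 < mu) (n m : ℕ) (h2 : 2 ≤ n)
    (hm : m + 1 ≤ n) :
    coefa R mu n (m + 1) * ((m : ℝ) + 1) * alph R mu n m
      = coefa R mu n m * ((n : ℝ) - (m : ℝ)) * ((m : ℝ) + alph R mu n m) := by
  have hα := (alph_pos R mu hR hmu n m h2 (by omega)).ne'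
  have hmn : m ≤ n := by omega
  have hc : (n.choose (m + 1) : ℝ) * ((m : ℝ) + 1) = (n.choose m : ℝ) * ((n : ℝ) - (m : ℝ)) := by
    have h := Nat.choose_succ_right_eq n m
    have h' : ((n.choose (m + 1) * (m + 1) : ℕ) : ℝ) = ((n.choose m * (n - m) : ℕ) : ℝ) := by
      exact_mod_cast congrArg (fun x : ℕ => (x : ℝ)) h
    push_cast [Nat.cast_sub hmn] at h'
    linarith
  have hQ : ∀ i ∈ Finset.range m, alph R mu n i ≠ 0 := fun i hi =>
    (alph_pos R mu hR hmu n i h2 (by have := Finset.mem_range.mp hi; omega)).ne'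
  have hQ' : (∏ i ∈ Finset.range m, alph R mu n i) ≠ 0 := Finset.prod_ne_zero_iff.mpr hQ
  unfold coefa
  rw [Finset.prod_range_succ, Finset.prod_div_distrib]
  calc (n.choose (m + 1) : ℝ)
        * ((∏ x ∈ Finset.range m, ((x : ℝ) + alph R mu n x))
            / (∏ x ∈ Finset.range m, alph R mu n x)
          * (((m : ℝ) + alph R mu n m) / alph R mu n m)) * ((m : ℝ) + 1) * alph R mu n m
      = ((n.choose (m + 1) : ℝ) * ((m : ℝ) + 1))
          * ((∏ x ∈ Finset.range m, ((x : ℝ) + alph R mu n x))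
              / (∏ x ∈ Finset.range m, alph R mu n x))
          * (((m : ℝ) + alph R mu n m) / alph R mu n m * alph R mu n m) := by ring
    _ = ((n.choose m : ℝ) * ((n : ℝ) - (m : ℝ)))
          * ((∏ x ∈ Finset.range m, ((x : ℝ) + alph R mu n x))
              / (∏ x ∈ Finset.range m, alph R mu n x))
          * ((m : ℝ) + alph R mu n m) := by rw [hc, div_mul_cancel₀ _ hα]
    _ = _ := by ring

theorem stmt4 (R mu : ℝ) (hR : 0 < R) (hmu : 0 < mu) (n : ℕ) (hn : 3 ≤ n)
    (j k : ℕ) (hj : j ≤ n - 2) (hk : k ≤ n - 2) :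
    Acoef R mu n j k
      = mu * R * ((n : ℝ) - 1)
          * (((n : ℝ) - (j : ℝ) - 1) * ((n : ℝ) - (k : ℝ)) * ((j : ℝ) + 1 - (k : ℝ)))
          / (alph R mu n (j + 1) * alph R mu n k)
          * coefa R mu n (j + 1) * coefa R mu n k := by
  have hn2 : 2 ≤ n := by omega
  have h1 := coefa_step R mu hR hmu n (j + 1) hn2 (by omega)
  have h2 := coefa_step R mu hR hmu n k hn2 (by omega)
  have hαj := (alph_pos R mu hR hmu n (j + 1) hn2 (by omega)).ne'
  have hαk := (alph_pos R mu hR hmu n k hn2 (by omega)).ne'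
  unfold alph at h1 h2
  push_cast at h1 h2
  have hj1 : j + 1 + 1 = j + 2 := by omega
  rw [hj1] at h1
  unfold Acoef
  rw [div_mul_eq_mul_div, div_mul_eq_mul_div, eq_div_iff (mul_ne_zero hαj hαk)]
  unfold alph
  push_cast
  linear_combination (((n : ℝ) - (k : ℝ)) * coefa R mu n k
        * (R * ((k : ℝ) + mu * ((n : ℝ) - (k : ℝ) - 1)))) * h1
    - ((((n : ℝ) - (j : ℝ) - 1) * coefa R mu n (j + 1))
        * (R * (((j : ℝ) + 1) + mu * ((n : ℝ) - ((j : ℝ) + 1) - 1)))) * h2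
end

section
/- For R > 0, μ > 0, n ≥ 2, the coefficients satisfy a_{j,n} ≤ ((1+R)/R)^j · binom(n,j) for 1 ≤ j ≤ n, and consequently Φ_n(X) ≤ R^{-n} ((1+R)X₁ + R X₂)^n for all X ∈ [0,∞)². -/
open Matrix Finset

theorem stmt12 (R mu : ℝ) (hR : 0 < R) (hmu : 0 < mu) (n : ℕ) (hn : 2 ≤ n) :
    (∀ j : ℕ, 1 ≤ j → j ≤ n →
      coefa R mu n j ≤ ((1 + R) / R) ^ j * (n.choose j : ℝ)) ∧
    (∀ X : ℝ × ℝ, 0 ≤ X.1 → 0 ≤ X.2 →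
      Phi R mu n X ≤ ((1 + R) * X.1 + R * X.2) ^ n / R ^ n) := by
  have hfac : ∀ k : ℕ, k < n →
      0 ≤ ((k : ℝ) + alph R mu n k) / alph R mu n k ∧
      ((k : ℝ) + alph R mu n k) / alph R mu n k ≤ (1 + R) / R := by
    intro k hk
    have hk' : (k : ℝ) + 1 ≤ (n : ℝ) := by exact_mod_cast hk
    have hn' : (2 : ℝ) ≤ (n : ℝ) := by exact_mod_cast hn
    have halph : 0 < alph R mu n k := by
      unfold alph
      rcases Nat.eq_zero_or_pos k with h0 | h1
      · subst h0; push_cast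
        have h2 : (0:ℝ) < (n:ℝ) - 1 := by linarith
        nlinarith [mul_pos hmu h2]
      · have h2 : (1 : ℝ) ≤ (k : ℝ) := by exact_mod_cast h1
        have h3 : (0:ℝ) ≤ (n:ℝ) - (k:ℝ) - 1 := by linarith
        nlinarith [mul_nonneg hmu.le h3]
    constructor
    · apply div_nonneg _ halph.le
      have : (0:ℝ) ≤ (k:ℝ) := Nat.cast_nonneg k
      linarith
    · rw [div_le_div_iff₀ halph hR]
      unfold alph
      nlinarith [mul_pos hR hmu, Nat.cast_nonneg (α := ℝ) k]
  have hprodnn : ∀ j : ℕ, j ≤ n →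
      0 ≤ ∏ k ∈ Finset.range j, ((k : ℝ) + alph R mu n k) / alph R mu n k := by
    intro j hj
    exact Finset.prod_nonneg fun k hk =>
      (hfac k (lt_of_lt_of_le (Finset.mem_range.mp hk) hj)).1
  have hprod : ∀ j : ℕ, j ≤ n →
      ∏ k ∈ Finset.range j, ((k : ℝ) + alph R mu n k) / alph R mu n k ≤ ((1 + R) / R) ^ j := by
    intro j hj
    calc ∏ k ∈ Finset.range j, ((k : ℝ) + alph R mu n k) / alph R mu n k
        ≤ ∏ k ∈ Finset.range j, (1 + R) / R :=
          Finset.prod_le_prod (fun k hk => (hfac k (lt_of_lt_of_le (Finset.mem_range.mp hk) hj)).1)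
            (fun k hk => (hfac k (lt_of_lt_of_le (Finset.mem_range.mp hk) hj)).2)
      _ = ((1 + R) / R) ^ j := by rw [Finset.prod_const, Finset.card_range]
  have hcoef : ∀ j : ℕ, j ≤ n →
      coefa R mu n j ≤ ((1 + R) / R) ^ j * (n.choose j : ℝ) := by
    intro j hj
    unfold coefa
    rw [mul_comm (((1 + R) / R) ^ j)]
    exact mul_le_mul_of_nonneg_left (hprod j hj) (Nat.cast_nonneg _)
  refine ⟨fun j _ hj => hcoef j hj, fun X hX1 hX2 => ?_⟩
  have hsum : Phi R mu n X ≤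
      ∑ j ∈ Finset.range (n + 1), ((1 + R) / R) ^ j * (n.choose j : ℝ) * X.1 ^ j * X.2 ^ (n - j) := by
    unfold Phi
    apply Finset.sum_le_sum
    intro j hj
    have hj' : j ≤ n := Nat.lt_succ_iff.mp (Finset.mem_range.mp hj)
    have hxy : 0 ≤ X.1 ^ j * X.2 ^ (n - j) := by positivity
    have := mul_le_mul_of_nonneg_right (hcoef j hj') hxy
    calc coefa R mu n j * X.1 ^ j * X.2 ^ (n - j)
        = coefa R mu n j * (X.1 ^ j * X.2 ^ (n - j)) := by ring
      _ ≤ (((1 + R) / R) ^ j * (n.choose j : ℝ)) * (X.1 ^ j * X.2 ^ (n - j)) := this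
      _ = ((1 + R) / R) ^ j * (n.choose j : ℝ) * X.1 ^ j * X.2 ^ (n - j) := by ring
  have hpow : ∑ j ∈ Finset.range (n + 1),
      ((1 + R) / R) ^ j * (n.choose j : ℝ) * X.1 ^ j * X.2 ^ (n - j)
      = ((1 + R) / R * X.1 + X.2) ^ n := by
    rw [add_pow]
    apply Finset.sum_congr rfl
    intro j _
    rw [mul_pow]
    ring
  have hfinal : ((1 + R) / R * X.1 + X.2) ^ n = ((1 + R) * X.1 + R * X.2) ^ n / R ^ n := by
    rw [← div_pow]
    congr 1
    field_simp
  rw [hpow, hfinal] at hsum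
  exact hsum
end

section
/- For R > 0, μ > 0, n ≥ 2, the top coefficient satisfies a_{n,n} ≥ exp{(n-1)[(1 + R max{1,μ}) ln(1 + 1/(R max{1,μ})) − 1]} = 1 + ν_n, where ν_n > 0. -/
open Matrix Finset

theorem stmt13 (R mu : ℝ) (hR : 0 < R) (hmu : 0 < mu) (n : ℕ) (hn : 2 ≤ n) :
    coefa R mu n n
        ≥ Real.exp (((n : ℝ) - 1)
            * ((1 + R * max 1 mu) * Real.log (1 + 1 / (R * max 1 mu)) - 1)) ∧
    Real.exp (((n : ℝ) - 1)
        * ((1 + R * max 1 mu) * Real.log (1 + 1 / (R * max 1 mu)) - 1))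
      = 1 + nuc R mu n ∧
    0 < nuc R mu n := by
  set c : ℝ := R * max 1 mu with hc_def
  have hM : (0:ℝ) < max 1 mu := lt_of_lt_of_le one_pos (le_max_left _ _)
  have hc : 0 < c := mul_pos hR hM
  set N : ℝ := (n:ℝ) - 1 with hN_def
  have hn2 : (2:ℝ) ≤ (n:ℝ) := by exact_mod_cast hn
  have hN1 : (1:ℝ) ≤ N := by rw [hN_def]; linarith
  have hN : 0 < N := lt_of_lt_of_le one_pos hN1
  have hcN : 0 < c * N := mul_pos hc hN
  -- exponent positivity
  have hloggt : 1 / (c + 1) < Real.log (c + 1) - Real.log c := by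
    have h1 : Real.log (c / (c + 1)) < c / (c + 1) - 1 := by
      apply Real.log_lt_sub_one_of_pos (by positivity)
      intro h
      field_simp at h
      linarith
    rw [Real.log_div (ne_of_gt hc) (by positivity)] at h1
    have h2 : c / (c + 1) - 1 = -(1 / (c + 1)) := by field_simp; ring
    linarith [h2 ▸ h1]
  have hlogrw : Real.log (1 + 1 / c) = Real.log (c + 1) - Real.log c := by
    rw [show (1 : ℝ) + 1 / c = (c + 1) / c by field_simp,
      Real.log_div (by positivity) (ne_of_gt hc)]
  have hEpos : 0 < ((n : ℝ) - 1) * ((1 + c) * Real.log (1 + 1 / c) - 1) := by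
    have h3 : (1 + c) * (1 / (c + 1)) = 1 := by field_simp; ring
    have h4 : 1 < (1 + c) * Real.log (1 + 1 / c) := by
      rw [hlogrw]
      nlinarith [hloggt]
    have : ((n:ℝ) - 1) = N := by rw [hN_def]
    rw [this]
    exact mul_pos hN (by linarith)
  -- key elementary inequality
  have key_log : ∀ a : ℝ, 0 < a → a * (Real.log (a + 1) - Real.log a) ≤ 1 := by
    intro a ha
    have h1 : Real.log ((a + 1) / a) ≤ (a + 1) / a - 1 :=
      Real.log_le_sub_one_of_pos (by positivity)
    rw [Real.log_div (by positivity) (ne_of_gt ha)] at h1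
    have h2 : (a + 1) / a - 1 = 1 / a := by field_simp; ring
    rw [h2] at h1
    have h3 : a * (Real.log (a + 1) - Real.log a) ≤ a * (1 / a) :=
      mul_le_mul_of_nonneg_left h1 ha.le
    have h4 : a * (1 / a) = 1 := by field_simp
    linarith
  -- the auxiliary function F
  set F : ℝ → ℝ := fun x => (c * N + x) * Real.log (1 + x / (c * N)) - x with hF_def
  have hF0 : F 0 = 0 := by simp [hF_def]
  have hstep : ∀ k : ℕ, F ((k : ℝ) + 1) - F (k : ℝ) ≤ Real.log (1 + ((k : ℝ) + 1) / (c * N)) := by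
    intro k
    have hk0 : (0:ℝ) ≤ (k:ℝ) := Nat.cast_nonneg k
    have ha : 0 < c * N + (k : ℝ) := by linarith
    have e1 : Real.log (1 + ((k : ℝ) + 1) / (c * N))
        = Real.log (c * N + ((k : ℝ) + 1)) - Real.log (c * N) := by
      rw [← show (c * N + ((k : ℝ) + 1)) / (c * N) = 1 + ((k : ℝ) + 1) / (c * N) from by
        rw [add_div, div_self (ne_of_gt hcN)]]
      exact Real.log_div (by positivity) (ne_of_gt hcN)
    have e2 : Real.log (1 + (k : ℝ) / (c * N))
        = Real.log (c * N + (k : ℝ)) - Real.log (c * N) := by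
      rw [← show (c * N + (k : ℝ)) / (c * N) = 1 + (k : ℝ) / (c * N) from by
        rw [add_div, div_self (ne_of_gt hcN)]]
      exact Real.log_div (by positivity) (ne_of_gt hcN)
    have hkl := key_log (c * N + (k : ℝ)) ha
    have e3 : Real.log (c * N + ((k:ℝ) + 1)) = Real.log ((c * N + (k:ℝ)) + 1) := by ring_nf
    rw [hF_def]
    simp only []
    rw [e1, e2, e3]
    nlinarith [hkl]
  -- telescoping
  have htel : ∑ k ∈ Finset.range (n - 1), (F ((k : ℝ) + 1) - F (k : ℝ)) = F N := by
    have h := Finset.sum_range_sub (fun k : ℕ => F (k : ℝ)) (n - 1)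
    simp only [Nat.cast_add, Nat.cast_one] at h
    rw [h, Nat.cast_zero, hF0, sub_zero]
    congr 1
    rw [hN_def, Nat.cast_sub (by omega : 1 ≤ n), Nat.cast_one]
  have hFN : F N = N * ((1 + c) * Real.log (1 + 1 / c) - 1) := by
    rw [hF_def]
    simp only []
    have h1 : N / (c * N) = 1 / c := by
      rw [div_eq_div_iff (ne_of_gt hcN) (ne_of_gt hc)]
      ring
    rw [h1]
    ring
  -- the sum of logs
  have hsum : N * ((1 + c) * Real.log (1 + 1 / c) - 1)
      ≤ ∑ k ∈ Finset.range n, Real.log (1 + (k : ℝ) / (c * N)) := by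
    have hn' : n = (n - 1) + 1 := by omega
    rw [hn', Finset.sum_range_succ']
    have h0 : Real.log (1 + ((0:ℕ) : ℝ) / (c * N)) = 0 := by simp
    rw [h0, add_zero]
    calc N * ((1 + c) * Real.log (1 + 1 / c) - 1) = F N := hFN.symm
      _ = ∑ k ∈ Finset.range (n - 1), (F ((k : ℝ) + 1) - F (k : ℝ)) := htel.symm
      _ ≤ ∑ k ∈ Finset.range (n - 1), Real.log (1 + (((k:ℕ) + 1 : ℕ) : ℝ) / (c * N)) := by
          apply Finset.sum_le_sum
          intro k _
          have := hstep k
          push_cast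
          exact this
  -- bounds on alph
  have halph : ∀ k ∈ Finset.range n, 0 < alph R mu n k ∧ alph R mu n k ≤ c * N := by
    intro k hk
    have hkn : k < n := Finset.mem_range.mp hk
    have hk1 : ((k:ℝ) + 1) ≤ (n:ℝ) := by exact_mod_cast hkn
    have hk0 : (0:ℝ) ≤ (k:ℝ) := Nat.cast_nonneg k
    have hrest : (0:ℝ) ≤ (n:ℝ) - (k:ℝ) - 1 := by linarith
    constructor
    · have hm : (0:ℝ) < min 1 mu := lt_min one_pos hmu
      have h1 : min 1 mu * (k:ℝ) ≤ (k:ℝ) :=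
        mul_le_of_le_one_left hk0 (min_le_left 1 mu)
      have h2 : min 1 mu * ((n:ℝ) - (k:ℝ) - 1) ≤ mu * ((n:ℝ) - (k:ℝ) - 1) :=
        mul_le_mul_of_nonneg_right (min_le_right 1 mu) hrest
      have h3 : min 1 mu * N ≤ (k:ℝ) + mu * ((n:ℝ) - (k:ℝ) - 1) := by
        have : min 1 mu * N = min 1 mu * (k:ℝ) + min 1 mu * ((n:ℝ) - (k:ℝ) - 1) := by
          rw [hN_def]; ring
        linarith
      exact mul_pos hR (lt_of_lt_of_le (mul_pos hm hN) h3)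
    · have h1 : (k:ℝ) ≤ max 1 mu * (k:ℝ) :=
        le_mul_of_one_le_left hk0 (le_max_left 1 mu)
      have h2 : mu * ((n:ℝ) - (k:ℝ) - 1) ≤ max 1 mu * ((n:ℝ) - (k:ℝ) - 1) :=
        mul_le_mul_of_nonneg_right (le_max_right 1 mu) hrest
      have h3 : (k:ℝ) + mu * ((n:ℝ) - (k:ℝ) - 1) ≤ max 1 mu * N := by
        have : max 1 mu * N = max 1 mu * (k:ℝ) + max 1 mu * ((n:ℝ) - (k:ℝ) - 1) := by
          rw [hN_def]; ring
        linarith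
      have h4 := mul_le_mul_of_nonneg_left h3 hR.le
      calc alph R mu n k = R * ((k:ℝ) + mu * ((n:ℝ) - (k:ℝ) - 1)) := rfl
        _ ≤ R * (max 1 mu * N) := h4
        _ = c * N := by rw [hc_def]; ring
  -- product comparison
  have hprod_eq : coefa R mu n n
      = ∏ k ∈ Finset.range n, ((k : ℝ) + alph R mu n k) / alph R mu n k := by
    simp [coefa, Nat.choose_self]
  have hfac : ∀ k ∈ Finset.range n,
      1 + (k : ℝ) / (c * N) ≤ ((k : ℝ) + alph R mu n k) / alph R mu n k := by
    intro k hk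
    obtain ⟨hpos, hle⟩ := halph k hk
    rw [add_div, div_self (ne_of_gt hpos)]
    have : (k:ℝ) / (c * N) ≤ (k:ℝ) / alph R mu n k :=
      div_le_div_of_nonneg_left (Nat.cast_nonneg k) hpos hle
    linarith
  have hprod_ge : ∏ k ∈ Finset.range n, (1 + (k : ℝ) / (c * N)) ≤ coefa R mu n n := by
    rw [hprod_eq]
    apply Finset.prod_le_prod
    · intro k _
      positivity
    · exact hfac
  have hexp : Real.exp (∑ k ∈ Finset.range n, Real.log (1 + (k : ℝ) / (c * N)))
      = ∏ k ∈ Finset.range n, (1 + (k : ℝ) / (c * N)) := by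
    rw [Real.exp_sum]
    exact Finset.prod_congr rfl (fun k _ => Real.exp_log (by positivity))
  refine ⟨?_, ?_, ?_⟩
  · have hNeq : ((n:ℝ) - 1) = N := by rw [hN_def]
    calc Real.exp (((n : ℝ) - 1) * ((1 + c) * Real.log (1 + 1 / c) - 1))
        = Real.exp (N * ((1 + c) * Real.log (1 + 1 / c) - 1)) := by rw [hNeq]
      _ ≤ Real.exp (∑ k ∈ Finset.range n, Real.log (1 + (k : ℝ) / (c * N))) :=
          Real.exp_le_exp.mpr hsum
      _ = ∏ k ∈ Finset.range n, (1 + (k : ℝ) / (c * N)) := hexp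
      _ ≤ coefa R mu n n := hprod_ge
  · rw [nuc, ← hc_def]; ring
  · rw [nuc, ← hc_def]
    have := Real.add_one_lt_exp (ne_of_gt hEpos)
    linarith
end
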